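/- Let C̃ ∈ ℝ^{m×d} and A ∈ ℝ^{m×n}, and let P denote the orthogonal projection onto the column span of C̃. Suppose every column of A lies in the column span of a matrix C with ‖(C̃ - C)‖₂ ≤ η and σ_min(C) ≥ 2η/√ε for ε ∈ (0,1), where C̃ and C have the same rank and C has full column rank. Then ‖(I - P)A‖_F ≤ √ε·‖A‖_F. -/

import Mathlib

open Matrix

noncomputable def frobSq {m n : ℕ} (A : Matrix (Fin m) (Fin n) ℝ) : ℝ :=
  ∑ i, ∑ j, (A i j)^2

noncomputable def svalSq {m n : ℕ} (A : Matrix (Fin m) (Fin n) ℝ) (i : Fin n) : ℝ :=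
  let eigs := (show (Aᵀ * A).IsHermitian by
    simpa [Matrix.conjTranspose_eq_transpose_of_trivial] using
      Matrix.isHermitian_conjTranspose_mul_self A).eigenvalues
  eigs (Tuple.sort eigs i.rev)

noncomputable def specNorm {m n : ℕ} (A : Matrix (Fin m) (Fin n) ℝ) : ℝ :=
  ‖LinearMap.toContinuousLinearMap (Matrix.toEuclideanLin A)‖

def colSpan {m n : ℕ} (A : Matrix (Fin m) (Fin n) ℝ) : Submodule ℝ (Fin m → ℝ) :=
  LinearMap.range A.mulVecLin

def IsProjOnto {m : ℕ} (P : Matrix (Fin m) (Fin m) ℝ) (K : Submodule ℝ (Fin m → ℝ)) : Prop :=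
  Pᵀ = P ∧ P * P = P ∧ LinearMap.range P.mulVecLin = K

noncomputable def enorm' {n : ℕ} (x : Fin n → ℝ) : ℝ := Real.sqrt (∑ i, (x i)^2)

/-! ### Auxiliary lemmas -/

lemma dotProduct_self_nonneg' {k : ℕ} (x : Fin k → ℝ) : 0 ≤ x ⬝ᵥ x :=
  Finset.sum_nonneg fun _ _ => mul_self_nonneg _

lemma rayleigh_lower {k : ℕ} {M : Matrix (Fin k) (Fin k) ℝ} (hM : M.IsHermitian) (c : ℝ)
    (hc : ∀ i, c ≤ hM.eigenvalues i) (x : Fin k → ℝ) :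
    c * (x ⬝ᵥ x) ≤ x ⬝ᵥ M *ᵥ x := by
  classical
  set U : Matrix (Fin k) (Fin k) ℝ := (Matrix.IsHermitian.eigenvectorUnitary hM : Matrix (Fin k) (Fin k) ℝ) with hU
  have hunit : U ∈ Matrix.unitaryGroup (Fin k) ℝ := (Matrix.IsHermitian.eigenvectorUnitary hM).2
  have hUU : U * star U = 1 := (Matrix.mem_unitaryGroup_iff.mp hunit)
  set y : Fin k → ℝ := star U *ᵥ x with hy
  have key : ∀ N : Matrix (Fin k) (Fin k) ℝ, x ⬝ᵥ ((U * N * star U) *ᵥ x) = y ⬝ᵥ (N *ᵥ y) := by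
    intro N
    rw [← Matrix.mulVec_mulVec, ← Matrix.mulVec_mulVec, Matrix.dotProduct_mulVec, hy]
    congr 1
    rw [← Matrix.mulVec_transpose]
    congr 1
  have hxy : x ⬝ᵥ x = y ⬝ᵥ y := by
    have h1 := key 1
    rw [Matrix.mul_one, hUU] at h1
    simpa using h1
  have hspec : x ⬝ᵥ M *ᵥ x = y ⬝ᵥ ((Matrix.diagonal (RCLike.ofReal ∘ hM.eigenvalues) : Matrix (Fin k) (Fin k) ℝ) *ᵥ y) := by
    conv_lhs => rw [hM.spectral_theorem]
    exact key _
  rw [hspec, hxy]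
  have h2 : y ⬝ᵥ ((Matrix.diagonal (RCLike.ofReal ∘ hM.eigenvalues) : Matrix (Fin k) (Fin k) ℝ) *ᵥ y)
      = ∑ i, hM.eigenvalues i * (y i)^2 := by
    simp only [dotProduct, Matrix.mulVec_diagonal]
    refine Finset.sum_congr rfl fun i _ => ?_
    simp [pow_two]; ring
  have h3 : c * (y ⬝ᵥ y) = ∑ i, c * (y i)^2 := by
    simp [dotProduct, Finset.mul_sum, pow_two]
  rw [h2, h3]
  exact Finset.sum_le_sum fun i _ => mul_le_mul_of_nonneg_right (hc i) (sq_nonneg _)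

lemma specNorm_nonneg {m n : ℕ} (M : Matrix (Fin m) (Fin n) ℝ) : 0 ≤ specNorm M :=
  norm_nonneg _

lemma specNorm_mulVec_sq {m n : ℕ} (M : Matrix (Fin m) (Fin n) ℝ) (x : Fin n → ℝ) :
    (M *ᵥ x) ⬝ᵥ (M *ᵥ x) ≤ (specNorm M)^2 * (x ⬝ᵥ x) := by
  set x' : EuclideanSpace ℝ (Fin n) := (WithLp.equiv 2 (Fin n → ℝ)).symm x with hx'
  have happ : (LinearMap.toContinuousLinearMap (Matrix.toEuclideanLin M)) x'
      = (WithLp.equiv 2 (Fin m → ℝ)).symm (M *ᵥ x) := by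
    simp [hx', Matrix.toEuclideanLin_apply]
  have hb := (LinearMap.toContinuousLinearMap (Matrix.toEuclideanLin M)).le_opNorm x'
  rw [happ] at hb
  have hn1 : ‖(WithLp.equiv 2 (Fin m → ℝ)).symm (M *ᵥ x)‖ = Real.sqrt ((M *ᵥ x) ⬝ᵥ (M *ᵥ x)) := by
    rw [EuclideanSpace.norm_eq]
    congr 1
    simp [dotProduct, Real.norm_eq_abs, sq_abs, pow_two]
  have hn2 : ‖x'‖ = Real.sqrt (x ⬝ᵥ x) := by
    rw [hx', EuclideanSpace.norm_eq]
    congr 1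
    simp [dotProduct, Real.norm_eq_abs, sq_abs, pow_two]
  rw [hn1, hn2] at hb
  have h1 : (M *ᵥ x) ⬝ᵥ (M *ᵥ x) = (Real.sqrt ((M *ᵥ x) ⬝ᵥ (M *ᵥ x)))^2 :=
    (Real.sq_sqrt (dotProduct_self_nonneg' _)).symm
  rw [h1]
  calc (Real.sqrt ((M *ᵥ x) ⬝ᵥ (M *ᵥ x)))^2
      ≤ (specNorm M * Real.sqrt (x ⬝ᵥ x))^2 := by
        apply pow_le_pow_left₀ (Real.sqrt_nonneg _) hb
    _ = (specNorm M)^2 * (x ⬝ᵥ x) := by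
        rw [mul_pow, Real.sq_sqrt (dotProduct_self_nonneg' _)]

lemma proj_contract {m : ℕ} {P : Matrix (Fin m) (Fin m) ℝ} (hsym : Pᵀ = P)
    (hidem : P * P = P) (w : Fin m → ℝ) :
    ((1 - P) *ᵥ w) ⬝ᵥ ((1 - P) *ᵥ w) ≤ w ⬝ᵥ w := by
  set Q : Matrix (Fin m) (Fin m) ℝ := 1 - P with hQ
  have hQsym : Qᵀ = Q := by rw [hQ, Matrix.transpose_sub, Matrix.transpose_one, hsym]
  have hQidem : Q * Q = Q := by
    rw [hQ, Matrix.sub_mul, Matrix.mul_sub, Matrix.mul_sub, Matrix.one_mul, Matrix.one_mul,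
      Matrix.mul_one, hidem]
    abel
  have key : ∀ (M : Matrix (Fin m) (Fin m) ℝ), Mᵀ = M → M * M = M →
      (M *ᵥ w) ⬝ᵥ (M *ᵥ w) = w ⬝ᵥ (M *ᵥ w) := by
    intro M hs hi
    rw [Matrix.dotProduct_mulVec, ← Matrix.mulVec_transpose, hs, Matrix.mulVec_mulVec, hi]
    exact dotProduct_comm _ _
  have h1 : (Q *ᵥ w) ⬝ᵥ (Q *ᵥ w) = w ⬝ᵥ (Q *ᵥ w) := key Q hQsym hQidem
  have h2 : (P *ᵥ w) ⬝ᵥ (P *ᵥ w) = w ⬝ᵥ (P *ᵥ w) := key P hsym hidem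
  have h3 : w ⬝ᵥ (Q *ᵥ w) = w ⬝ᵥ w - w ⬝ᵥ (P *ᵥ w) := by
    rw [hQ, Matrix.sub_mulVec, Matrix.one_mulVec, dotProduct_sub]
  have h4 : 0 ≤ w ⬝ᵥ (P *ᵥ w) := h2 ▸ dotProduct_self_nonneg' _
  rw [h1, h3]
  linarith

lemma proj_annihilate {m : ℕ} {P : Matrix (Fin m) (Fin m) ℝ} (hidem : P * P = P)
    {v : Fin m → ℝ} (hv : v ∈ LinearMap.range P.mulVecLin) : (1 - P) *ᵥ v = 0 := by
  obtain ⟨u, hu⟩ := hv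
  have hu' : P *ᵥ u = v := hu
  rw [Matrix.sub_mulVec, Matrix.one_mulVec, ← hu', Matrix.mulVec_mulVec, hidem, sub_self]

lemma svalSq_min {m d : ℕ} (hd : 0 < d) (C : Matrix (Fin m) (Fin d) ℝ) (j : Fin d) :
    svalSq C ⟨d-1, by omega⟩ ≤ (Matrix.isHermitian_conjTranspose_mul_self C).eigenvalues j := by
  set eigs := (Matrix.isHermitian_conjTranspose_mul_self C).eigenvalues with heigs
  have hrev : (⟨d-1, by omega⟩ : Fin d).rev = ⟨0, hd⟩ := by
    ext
    simp [Fin.rev]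
    omega
  show eigs (Tuple.sort eigs (⟨d-1, by omega⟩ : Fin d).rev) ≤ eigs j
  rw [hrev]
  have hmono := Tuple.monotone_sort eigs
    (a := (⟨0, hd⟩ : Fin d)) (b := (Tuple.sort eigs).symm j) (Fin.le_def.mpr (Nat.zero_le _))
  simpa using hmono

theorem stmt5 {m n d : ℕ} (ε η : ℝ) (hε : ε ∈ Set.Ioo (0:ℝ) 1) (hd : 0 < d)
    (C Ct : Matrix (Fin m) (Fin d) ℝ) (A : Matrix (Fin m) (Fin n) ℝ)
    (P : Matrix (Fin m) (Fin m) ℝ) (hP : IsProjOnto P (colSpan Ct))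
    (hspan : colSpan A ≤ colSpan C)
    (hpert : specNorm (Ct - C) ≤ η)
    (hfull : C.rank = d) (hsame : Ct.rank = C.rank)
    (hsig : 2 * η / Real.sqrt ε ≤ Real.sqrt (svalSq C ⟨d-1, by omega⟩)) :
    Real.sqrt (frobSq ((1 - P) * A)) ≤ Real.sqrt ε * Real.sqrt (frobSq A) := by
  obtain ⟨hε0, hε1⟩ := hε
  obtain ⟨hsym, hidem, hrange⟩ := hP
  have hη0 : 0 ≤ η := le_trans (specNorm_nonneg _) hpert
  set lm := svalSq C ⟨d-1, by omega⟩ with hlm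
  have hlm0 : 0 ≤ lm :=
    Matrix.eigenvalues_conjTranspose_mul_self_nonneg C _
  -- squared singular-value hypothesis
  have hsq : (2*η/Real.sqrt ε)^2 ≤ lm := by
    have h := pow_le_pow_left₀
      (div_nonneg (by linarith) (Real.sqrt_nonneg _)) hsig 2
    rwa [Real.sq_sqrt hlm0] at h
  have hηsq : η^2 * 4 ≤ ε * lm := by
    have hse : (0:ℝ) < Real.sqrt ε := Real.sqrt_pos.mpr hε0
    have heq : (2*η/Real.sqrt ε)^2 = 4*η^2/ε := by
      rw [div_pow, Real.sq_sqrt hε0.le]; ring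
    rw [heq, div_le_iff₀ hε0] at hsq
    nlinarith
  -- per-column bound
  have col : ∀ j : Fin n,
      (((1-P) *ᵥ (fun i => A i j)) ⬝ᵥ ((1-P) *ᵥ (fun i => A i j)))
        ≤ ε * ((fun i => A i j) ⬝ᵥ (fun i => A i j)) := by
    intro j
    set a : Fin m → ℝ := fun i => A i j with ha
    have hmemA : a ∈ colSpan A := ⟨Pi.single j 1, by
      ext i
      simp [Matrix.mulVecLin_apply, Matrix.mulVec_single, ha]⟩
    obtain ⟨x, hx⟩ := hspan hmemA
    have hx' : C *ᵥ x = a := hx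
    have hCt : (1-P) *ᵥ (Ct *ᵥ x) = 0 := by
      apply proj_annihilate hidem
      rw [hrange]
      exact ⟨x, rfl⟩
    have key0 : (1-P) *ᵥ a = (1-P) *ᵥ (a - Ct *ᵥ x) := by
      rw [Matrix.mulVec_sub, hCt, sub_zero]
    have hw : a - Ct *ᵥ x = (Ct - C) *ᵥ ((-1 : ℝ) • x) := by
      rw [Matrix.mulVec_smul, Matrix.sub_mulVec, hx']
      ext i
      simp
    have hray : lm * (x ⬝ᵥ x) ≤ a ⬝ᵥ a := by
      have h := rayleigh_lower (Matrix.isHermitian_conjTranspose_mul_self C) lm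
        (fun i => svalSq_min hd C i) x
      have heq : x ⬝ᵥ (Cᴴ * C) *ᵥ x = a ⬝ᵥ a := by
        rw [← hx', ← Matrix.mulVec_mulVec, Matrix.dotProduct_mulVec]
        congr 1
        rw [← Matrix.mulVec_transpose]
        congr 1
      rwa [heq] at h
    have hxx : ((-1:ℝ) • x) ⬝ᵥ ((-1:ℝ) • x) = x ⬝ᵥ x := by
      simp
    calc ((1-P) *ᵥ a) ⬝ᵥ ((1-P) *ᵥ a)
        = ((1-P) *ᵥ (a - Ct *ᵥ x)) ⬝ᵥ ((1-P) *ᵥ (a - Ct *ᵥ x)) := by rw [key0]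
      _ ≤ (a - Ct *ᵥ x) ⬝ᵥ (a - Ct *ᵥ x) := proj_contract hsym hidem _
      _ = ((Ct - C) *ᵥ ((-1:ℝ) • x)) ⬝ᵥ ((Ct - C) *ᵥ ((-1:ℝ) • x)) := by rw [hw]
      _ ≤ (specNorm (Ct - C))^2 * (((-1:ℝ) • x) ⬝ᵥ ((-1:ℝ) • x)) := specNorm_mulVec_sq _ _
      _ = (specNorm (Ct - C))^2 * (x ⬝ᵥ x) := by rw [hxx]
      _ ≤ η^2 * (x ⬝ᵥ x) := by
          exact mul_le_mul_of_nonneg_right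
            (pow_le_pow_left₀ (specNorm_nonneg _) hpert 2) (dotProduct_self_nonneg' x)
      _ ≤ ε * (a ⬝ᵥ a) := by
          nlinarith [dotProduct_self_nonneg' x, dotProduct_self_nonneg' a,
            mul_le_mul_of_nonneg_right hηsq (dotProduct_self_nonneg' x),
            mul_le_mul_of_nonneg_left hray (le_of_lt hε0)]
  -- sum over columns
  have hfrobQ : frobSq ((1-P)*A)
      = ∑ j, ((1-P) *ᵥ (fun i => A i j)) ⬝ᵥ ((1-P) *ᵥ (fun i => A i j)) := by
    rw [frobSq, Finset.sum_comm]
    refine Finset.sum_congr rfl fun j _ => ?_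
    refine Finset.sum_congr rfl fun i _ => ?_
    simp [Matrix.mul_apply, Matrix.mulVec, dotProduct, pow_two]
  have hfrobA : frobSq A = ∑ j, (fun i => A i j) ⬝ᵥ (fun i => A i j) := by
    rw [frobSq, Finset.sum_comm]
    refine Finset.sum_congr rfl fun j _ => ?_
    refine Finset.sum_congr rfl fun i _ => ?_
    simp [dotProduct, pow_two]
  have hmain : frobSq ((1-P)*A) ≤ ε * frobSq A := by
    rw [hfrobQ, hfrobA, Finset.mul_sum]
    exact Finset.sum_le_sum fun j _ => col j
  calc Real.sqrt (frobSq ((1-P)*A)) ≤ Real.sqrt (ε * frobSq A) := Real.sqrt_le_sqrt hmain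
    _ = Real.sqrt ε * Real.sqrt (frobSq A) := Real.sqrt_mul hε0.le _
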